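/- Let P : ℝ² → ℝ be a polynomial of degree at most 2 in each variable, h > 0, (n₁, n₂) ∈ ℤ². Write P_{(i,j)} = P(ih, jh) and P̄_{(i,j)} for the 2D cell average over [ih-h/2, ih+h/2]×[jh-h/2, jh+h/2]. Then (16/9)·P̄_{(n₁,n₂)} - (2/9)·(P̄_{(n₁-1,n₂)} + P̄_{(n₁+1,n₂)} + P̄_{(n₁,n₂-1)} + P̄_{(n₁,n₂+1)}) + (1/36)·(P̄_{(n₁-1,n₂-1)} + P̄_{(n₁+1,n₂+1)} + P̄_{(n₁+1,n₂-1)} + P̄_{(n₁-1,n₂+1)}) = (25/16)·P_{(n₁,n₂)} - (5/32)·(P_{(n₁-1,n₂)} + P_{(n₁+1,n₂)} + P_{(n₁,n₂-1)} + P_{(n₁,n₂+1)}) + (1/64)·(P_{(n₁-1,n₂-1)} + P_{(n₁+1,n₂+1)} + P_{(n₁+1,n₂-1)} + P_{(n₁-1,n₂+1)}). -/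

import Mathlib

set_option maxHeartbeats 2000000


lemma stmt18_aux (c : Fin 3 → Fin 3 → ℝ) (a b a' b' : ℝ) :
    (∫ s in a..b, ∫ t in a'..b',
        ∑ i : Fin 3, ∑ j : Fin 3, c i j * s ^ (i : ℕ) * t ^ (j : ℕ)) =
    ∑ i : Fin 3, ∑ j : Fin 3, c i j *
      ((b ^ ((i : ℕ) + 1) - a ^ ((i : ℕ) + 1)) / ((i : ℕ) + 1)) *
      ((b' ^ ((j : ℕ) + 1) - a' ^ ((j : ℕ) + 1)) / ((j : ℕ) + 1)) := by
  have h1 : ∀ s : ℝ, (∫ t in a'..b',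
      ∑ i : Fin 3, ∑ j : Fin 3, c i j * s ^ (i : ℕ) * t ^ (j : ℕ)) =
      ∑ i : Fin 3, ∑ j : Fin 3, c i j * s ^ (i : ℕ) *
        ((b' ^ ((j : ℕ) + 1) - a' ^ ((j : ℕ) + 1)) / ((j : ℕ) + 1)) := by
    intro s
    rw [intervalIntegral.integral_finset_sum (fun i _ =>
      ((by fun_prop : Continuous fun t : ℝ =>
        ∑ j : Fin 3, c i j * s ^ (i : ℕ) * t ^ (j : ℕ))).intervalIntegrable _ _)]
    refine Finset.sum_congr rfl fun i _ => ?_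
    rw [intervalIntegral.integral_finset_sum (fun j _ =>
      ((by fun_prop : Continuous fun t : ℝ =>
        c i j * s ^ (i : ℕ) * t ^ (j : ℕ))).intervalIntegrable _ _)]
    refine Finset.sum_congr rfl fun j _ => ?_
    rw [intervalIntegral.integral_const_mul, integral_pow]
  simp_rw [h1]
  rw [intervalIntegral.integral_finset_sum (fun i _ =>
    ((by fun_prop : Continuous fun s : ℝ =>
      ∑ j : Fin 3, c i j * s ^ (i : ℕ) *
        ((b' ^ ((j : ℕ) + 1) - a' ^ ((j : ℕ) + 1)) / ((j : ℕ) + 1)))).intervalIntegrable _ _)]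
  refine Finset.sum_congr rfl fun i _ => ?_
  rw [intervalIntegral.integral_finset_sum (fun j _ =>
    ((by fun_prop : Continuous fun s : ℝ =>
      c i j * s ^ (i : ℕ) *
        ((b' ^ ((j : ℕ) + 1) - a' ^ ((j : ℕ) + 1)) / ((j : ℕ) + 1)))).intervalIntegrable _ _)]
  refine Finset.sum_congr rfl fun j _ => ?_
  have : (fun s : ℝ => c i j * s ^ (i : ℕ) *
      ((b' ^ ((j : ℕ) + 1) - a' ^ ((j : ℕ) + 1)) / ((j : ℕ) + 1))) =
      fun s : ℝ => (c i j * ((b' ^ ((j : ℕ) + 1) - a' ^ ((j : ℕ) + 1)) / ((j : ℕ) + 1))) * s ^ (i : ℕ) := by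
    funext s; ring
  rw [this, intervalIntegral.integral_const_mul, integral_pow]
  ring

theorem stmt18 (c : Fin 3 → Fin 3 → ℝ) (P : ℝ → ℝ → ℝ)
    (hP : ∀ x y : ℝ, P x y = ∑ i : Fin 3, ∑ j : Fin 3, c i j * x ^ (i : ℕ) * y ^ (j : ℕ))
    (h : ℝ) (hh : 0 < h) (n₁ n₂ : ℤ) (Pb : ℤ → ℤ → ℝ)
    (hPb : ∀ i j : ℤ, Pb i j = (1 / h ^ 2) *
        ∫ s in ((i : ℝ) * h - h / 2)..((i : ℝ) * h + h / 2),
          ∫ t in ((j : ℝ) * h - h / 2)..((j : ℝ) * h + h / 2), P s t) :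
    (16 / 9) * Pb n₁ n₂
        - (2 / 9) * (Pb (n₁ - 1) n₂ + Pb (n₁ + 1) n₂ + Pb n₁ (n₂ - 1) + Pb n₁ (n₂ + 1))
        + (1 / 36) * (Pb (n₁ - 1) (n₂ - 1) + Pb (n₁ + 1) (n₂ + 1)
            + Pb (n₁ + 1) (n₂ - 1) + Pb (n₁ - 1) (n₂ + 1))
      = (25 / 16) * P ((n₁ : ℝ) * h) ((n₂ : ℝ) * h)
        - (5 / 32) * (P (((n₁ - 1 : ℤ) : ℝ) * h) ((n₂ : ℝ) * h)
            + P (((n₁ + 1 : ℤ) : ℝ) * h) ((n₂ : ℝ) * h)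
            + P ((n₁ : ℝ) * h) (((n₂ - 1 : ℤ) : ℝ) * h)
            + P ((n₁ : ℝ) * h) (((n₂ + 1 : ℤ) : ℝ) * h))
        + (1 / 64) * (P (((n₁ - 1 : ℤ) : ℝ) * h) (((n₂ - 1 : ℤ) : ℝ) * h)
            + P (((n₁ + 1 : ℤ) : ℝ) * h) (((n₂ + 1 : ℤ) : ℝ) * h)
            + P (((n₁ + 1 : ℤ) : ℝ) * h) (((n₂ - 1 : ℤ) : ℝ) * h)
            + P (((n₁ - 1 : ℤ) : ℝ) * h) (((n₂ + 1 : ℤ) : ℝ) * h)) := by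
  have key : ∀ m n : ℤ, Pb m n = (1 / h ^ 2) *
      ∑ i : Fin 3, ∑ j : Fin 3, c i j *
        ((((m : ℝ) * h + h / 2) ^ ((i : ℕ) + 1) - ((m : ℝ) * h - h / 2) ^ ((i : ℕ) + 1)) / ((i : ℕ) + 1)) *
        ((((n : ℝ) * h + h / 2) ^ ((j : ℕ) + 1) - ((n : ℝ) * h - h / 2) ^ ((j : ℕ) + 1)) / ((j : ℕ) + 1)) := by
    intro m n
    rw [hPb]
    simp_rw [hP]
    rw [stmt18_aux]
  simp_rw [key, hP, Fin.sum_univ_three]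
  push_cast
  have hne : h ≠ 0 := ne_of_gt hh
  simp only [Fin.val_zero, Fin.val_one, Fin.val_two]
  field_simp
  ring
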